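/- Let X₀, Y₀, X*, Y* ∈ ℝ³ with X* ≠ Y*. If for every point Q ∈ ℝ³ with Q ∉ {X₀, Y₀, X*, Y*} one has 1/‖X₀−Q‖² + 1/‖Y₀−Q‖² = 1/‖X*−Q‖² + 1/‖Y*−Q‖², then (X₀,Y₀) = (X*,Y*) or (X₀,Y₀) = (Y*,X*); that is, the function Q ↦ 1/‖X−Q‖² + 1/‖Y−Q‖² determines the unordered pair {X,Y}. -/

import Mathlib

noncomputable section

/-- The Euclidean space ℝ³. -/
abbrev E3 := EuclideanSpace ℝ (Fin 3)

lemma key_singularity (A B C D : E3)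
    (h : ∀ Q : E3, Q ≠ A → Q ≠ B → Q ≠ C → Q ≠ D →
      1 / ‖A - Q‖ ^ 2 + 1 / ‖B - Q‖ ^ 2 = 1 / ‖C - Q‖ ^ 2 + 1 / ‖D - Q‖ ^ 2)
    (hC : A ≠ C) (hD : A ≠ D) : False := by
  classical
  have hdC : 0 < ‖C - A‖ := by
    rw [norm_pos_iff, sub_ne_zero]; exact fun e => hC e.symm
  have hdD : 0 < ‖D - A‖ := by
    rw [norm_pos_iff, sub_ne_zero]; exact fun e => hD e.symm
  set d : ℝ := min ‖C - A‖ ‖D - A‖ with hd_def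
  have hd : 0 < d := lt_min hdC hdD
  set e : ℝ := if B = A then d else ‖B - A‖ with he_def
  have he : 0 < e := by
    by_cases hBA : B = A
    · simp [he_def, hBA, hd]
    · simp only [he_def, if_neg hBA]
      rw [norm_pos_iff, sub_ne_zero]; exact hBA
  set t : ℝ := min (d / 4) (e / 2) with ht_def
  have ht : 0 < t := lt_min (by linarith) (by linarith)
  have htd : t ≤ d / 4 := min_le_left _ _
  have hte : t ≤ e / 2 := min_le_right _ _
  set v : E3 := EuclideanSpace.single (0 : Fin 3) (1 : ℝ) with hv_def
  have hv : ‖v‖ = 1 := by simp [hv_def]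
  set Q : E3 := A + t • v with hQ_def
  have hAQ : ‖A - Q‖ = t := by
    rw [hQ_def]
    have : A - (A + t • v) = -(t • v) := by abel
    rw [this, norm_neg, norm_smul, hv, mul_one, Real.norm_eq_abs, abs_of_pos ht]
  have hQA : Q ≠ A := by
    intro hE
    rw [hE, sub_self, norm_zero] at hAQ
    exact ht.ne' hAQ.symm
  have hCQ : 3 * d / 4 ≤ ‖C - Q‖ := by
    have h1 : ‖C - A‖ - ‖A - Q‖ ≤ ‖C - Q‖ := by
      have := norm_sub_le (C - Q) (A - Q)
      have heq : C - Q - (A - Q) = C - A := by abel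
      rw [heq] at this
      linarith
    have h2 : d ≤ ‖C - A‖ := min_le_left _ _
    rw [hAQ] at h1; linarith
  have hDQ : 3 * d / 4 ≤ ‖D - Q‖ := by
    have h1 : ‖D - A‖ - ‖A - Q‖ ≤ ‖D - Q‖ := by
      have := norm_sub_le (D - Q) (A - Q)
      have heq : D - Q - (A - Q) = D - A := by abel
      rw [heq] at this
      linarith
    have h2 : d ≤ ‖D - A‖ := min_le_right _ _
    rw [hAQ] at h1; linarith
  have hQC : Q ≠ C := by
    intro hE; rw [hE, sub_self, norm_zero] at hCQ; linarith
  have hQD : Q ≠ D := by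
    intro hE; rw [hE, sub_self, norm_zero] at hDQ; linarith
  have hQB : Q ≠ B := by
    by_cases hBA : B = A
    · rw [hBA]; exact hQA
    · intro hE
      have heB : e = ‖B - A‖ := by simp [he_def, hBA]
      rw [← hE] at heB
      have : Q - A = t • v := by rw [hQ_def]; abel
      rw [this, norm_smul, hv, mul_one, Real.norm_eq_abs, abs_of_pos ht] at heB
      linarith
  have heq := h Q hQA hQB hQC hQD
  have hb : 0 < ‖B - Q‖ := by
    rw [norm_pos_iff, sub_ne_zero]; exact fun hh => hQB hh.symm
  -- bounds
  have hL : 16 / d ^ 2 ≤ 1 / ‖A - Q‖ ^ 2 := by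
    rw [hAQ]
    have h1 : t ^ 2 ≤ (d / 4) ^ 2 := by nlinarith
    have h2 : 1 / ((d / 4) ^ 2) ≤ 1 / t ^ 2 :=
      one_div_le_one_div_of_le (by positivity) h1
    have h3 : 1 / ((d / 4) ^ 2) = 16 / d ^ 2 := by
      field_simp; ring
    linarith
  have hRC : 1 / ‖C - Q‖ ^ 2 ≤ 16 / (9 * d ^ 2) := by
    have h1 : (3 * d / 4) ^ 2 ≤ ‖C - Q‖ ^ 2 := by nlinarith
    have h2 : 1 / ‖C - Q‖ ^ 2 ≤ 1 / ((3 * d / 4) ^ 2) :=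
      one_div_le_one_div_of_le (by positivity) h1
    have h3 : 1 / ((3 * d / 4) ^ 2) = 16 / (9 * d ^ 2) := by
      field_simp; ring
    linarith
  have hRD : 1 / ‖D - Q‖ ^ 2 ≤ 16 / (9 * d ^ 2) := by
    have h1 : (3 * d / 4) ^ 2 ≤ ‖D - Q‖ ^ 2 := by nlinarith
    have h2 : 1 / ‖D - Q‖ ^ 2 ≤ 1 / ((3 * d / 4) ^ 2) :=
      one_div_le_one_div_of_le (by positivity) h1
    have h3 : 1 / ((3 * d / 4) ^ 2) = 16 / (9 * d ^ 2) := by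
      field_simp; ring
    linarith
  have hBpos : 0 < 1 / ‖B - Q‖ ^ 2 := by positivity
  have hgap : 16 / (9 * d ^ 2) + 16 / (9 * d ^ 2) < 16 / d ^ 2 := by
    have hd2 : (0:ℝ) < d ^ 2 := by positivity
    rw [← add_div, div_lt_div_iff₀ (by positivity) (by positivity)]
    linarith
  linarith

/-- The function Q ↦ 1/‖X−Q‖² + 1/‖Y−Q‖² determines the unordered pair {X, Y}. -/
theorem unordered_pair_determined
    (X₀ Y₀ Xs Ys : E3) (hXY : Xs ≠ Ys)
    (h : ∀ Q : E3, Q ≠ X₀ → Q ≠ Y₀ → Q ≠ Xs → Q ≠ Ys →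
      1 / ‖X₀ - Q‖ ^ 2 + 1 / ‖Y₀ - Q‖ ^ 2 = 1 / ‖Xs - Q‖ ^ 2 + 1 / ‖Ys - Q‖ ^ 2) :
    (X₀ = Xs ∧ Y₀ = Ys) ∨ (X₀ = Ys ∧ Y₀ = Xs) := by
  have hA : X₀ = Xs ∨ X₀ = Ys := by
    by_contra hc
    push_neg at hc
    exact key_singularity X₀ Y₀ Xs Ys h hc.1 hc.2
  have hB : Y₀ = Xs ∨ Y₀ = Ys := by
    by_contra hc
    push_neg at hc
    refine key_singularity Y₀ X₀ Xs Ys ?_ hc.1 hc.2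
    intro Q h1 h2 h3 h4
    have := h Q h2 h1 h3 h4
    linarith
  rcases hA with hA | hA <;> rcases hB with hB | hB
  · -- X₀ = Xs, Y₀ = Xs : contradiction via Ys
    exfalso
    refine key_singularity Ys Xs X₀ Y₀ ?_ ?_ ?_
    · intro Q h1 h2 h3 h4
      have := h Q h3 h4 h2 h1
      linarith
    · rw [hA]; exact fun e => hXY e.symm
    · rw [hB]; exact fun e => hXY e.symm
  · exact Or.inl ⟨hA, hB⟩
  · exact Or.inr ⟨hA, hB⟩
  · -- X₀ = Ys, Y₀ = Ys : contradiction via Xs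
    exfalso
    refine key_singularity Xs Ys X₀ Y₀ ?_ ?_ ?_
    · intro Q h1 h2 h3 h4
      exact (h Q h3 h4 h1 h2).symm
    · rw [hA]; exact hXY
    · rw [hB]; exact hXY
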